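/- Let Γ be a vertex-transitive reflexive locally-finite relation on V. Define the kernel graph Ω by Ω(v) = Γ(v) ∩ K_v for each v. Then Ω is vertex-transitive, and moreover Ω⁻(v) \ {v} ⊆ ∂(K_v) for every v ∈ V. -/
import Mathlib


open Set Pointwise

variable {V : Type*}

/-- Image of a set under the relation. -/
def img (Γ : V → Set V) (F : Set V) : Set V := ⋃ x ∈ F, Γ x
/-- Reverse relation. -/
def rev (Γ : V → Set V) : V → Set V := fun y => {x | y ∈ Γ x}
/-- Boundary ∂(F) = Γ(F) \ F. -/
def bd (Γ : V → Set V) (F : Set V) : Set V := img Γ F \ F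
/-- ∇(F) = V \ (F ∪ Γ(F)). -/
def nab (Γ : V → Set V) (F : Set V) : Set V := (F ∪ img Γ F)ᶜ
/-- Reflexive relation. -/
def Refl (Γ : V → Set V) : Prop := ∀ x, x ∈ Γ x
/-- Locally finite relation. -/
def LocFin (Γ : V → Set V) : Prop := ∀ x, (Γ x).Finite
/-- Automorphism of the relation. -/
def IsAuto (Γ : V → Set V) (φ : V ≃ V) : Prop := ∀ x, Γ (φ x) = φ '' Γ x
/-- Vertex-transitivity. -/
def VT (Γ : V → Set V) : Prop := ∀ x y : V, ∃ φ : V ≃ V, IsAuto Γ φ ∧ φ x = y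
/-- A finite v-Moser set. -/
def MoserSet (Γ : V → Set V) (v : V) (F : Set V) : Prop :=
  F.Finite ∧ v ∈ F ∧ rev Γ v ∩ F = {v}
/-- μ(v): minimum boundary size over v-Moser sets. -/
noncomputable def mu (Γ : V → Set V) (v : V) : ℕ :=
  sInf {n | ∃ F, MoserSet Γ v F ∧ (bd Γ F).ncard = n}
/-- A v-molecule: Moser set of minimum boundary. -/
def Molecule (Γ : V → Set V) (v : V) (F : Set V) : Prop :=
  MoserSet Γ v F ∧ (bd Γ F).ncard = mu Γ v
/-- The v-kernel: the unique minimal v-molecule. -/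
def IsKernel (Γ : V → Set V) (v : V) (K : Set V) : Prop :=
  Molecule Γ v K ∧ ∀ F, Molecule Γ v F → K ⊆ F
/-- Weak connectivity κ₀. -/
noncomputable def kappa0 (Γ : V → Set V) : ℕ :=
  sInf {n | ∃ X : Set V, X.Finite ∧ X.Nonempty ∧ (bd Γ X).ncard = n}
/-- Weak fragment. -/
def WeakFragment (Γ : V → Set V) (X : Set V) : Prop :=
  X.Finite ∧ X.Nonempty ∧ (bd Γ X).ncard = kappa0 Γ
/-- Weak atom: a weak fragment of minimum cardinality. -/
def WeakAtom (Γ : V → Set V) (X : Set V) : Prop :=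
  WeakFragment Γ X ∧ ∀ Y, WeakFragment Γ Y → X.ncard ≤ Y.ncard

section Aux

variable {Γ : V → Set V} {φ : V ≃ V}

lemma auto_symm (h : IsAuto Γ φ) : IsAuto Γ φ.symm := by
  intro x
  have h2 := h (φ.symm x)
  rw [φ.apply_symm_apply] at h2
  rw [h2, Set.image_image]
  simp

lemma img_auto (h : IsAuto Γ φ) (F : Set V) : img Γ (φ '' F) = φ '' img Γ F := by
  ext y
  simp only [img, mem_iUnion, Set.mem_image, exists_prop]
  constructor
  · rintro ⟨x, ⟨z, hz, rfl⟩, hy⟩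
    rw [h z] at hy
    obtain ⟨u, hu, rfl⟩ := hy
    exact ⟨u, ⟨z, hz, hu⟩, rfl⟩
  · rintro ⟨u, ⟨z, hz, hu⟩, rfl⟩
    exact ⟨φ z, ⟨z, hz, rfl⟩, by rw [h z]; exact ⟨u, hu, rfl⟩⟩

lemma rev_auto (h : IsAuto Γ φ) (x : V) : rev Γ (φ x) = φ '' rev Γ x := by
  ext y
  simp only [rev, mem_setOf_eq, Set.mem_image]
  constructor
  · intro hy
    refine ⟨φ.symm y, ?_, φ.apply_symm_apply y⟩
    have h2 := h (φ.symm y)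
    rw [φ.apply_symm_apply] at h2
    rw [h2] at hy
    simpa [Set.mem_image, φ.injective.eq_iff, mem_setOf_eq] using hy
  · rintro ⟨z, hz, rfl⟩
    rw [h z]
    exact ⟨x, hz, rfl⟩

lemma bd_auto (h : IsAuto Γ φ) (F : Set V) : bd Γ (φ '' F) = φ '' bd Γ F := by
  rw [bd, bd, img_auto h, Set.image_diff φ.injective]

lemma moser_auto (h : IsAuto Γ φ) {x : V} {F : Set V} (hF : MoserSet Γ x F) :
    MoserSet Γ (φ x) (φ '' F) := by
  obtain ⟨hfin, hx, hrev⟩ := hF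
  refine ⟨hfin.image _, ⟨x, hx, rfl⟩, ?_⟩
  rw [rev_auto h, ← Set.image_inter φ.injective, hrev, Set.image_singleton]

lemma ncard_image (φ : V ≃ V) (S : Set V) : (φ '' S).ncard = S.ncard :=
  Set.ncard_image_of_injective _ φ.injective

lemma mu_auto (h : IsAuto Γ φ) (x : V) : mu Γ (φ x) = mu Γ x := by
  unfold mu
  congr 1
  ext n
  simp only [mem_setOf_eq]
  constructor
  · rintro ⟨F, hF, rfl⟩
    refine ⟨φ.symm '' F, ?_, ?_⟩
    · have := moser_auto (auto_symm h) hF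
      rwa [φ.symm_apply_apply] at this
    · rw [bd_auto (auto_symm h), ncard_image]
  · rintro ⟨F, hF, rfl⟩
    exact ⟨φ '' F, moser_auto h hF, by rw [bd_auto h, ncard_image]⟩

lemma molecule_auto (h : IsAuto Γ φ) {x : V} {F : Set V} (hF : Molecule Γ x F) :
    Molecule Γ (φ x) (φ '' F) := by
  obtain ⟨hm, hmu⟩ := hF
  exact ⟨moser_auto h hm, by rw [bd_auto h, ncard_image, hmu, mu_auto h]⟩

lemma kernel_auto (h : IsAuto Γ φ) {x : V} {Kx : Set V} (hx : IsKernel Γ x Kx) :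
    IsKernel Γ (φ x) (φ '' Kx) := by
  refine ⟨molecule_auto h hx.1, fun F hF => ?_⟩
  have hF' := molecule_auto (auto_symm h) hF
  rw [φ.symm_apply_apply] at hF'
  have := hx.2 _ hF'
  intro y hy
  obtain ⟨z, hz, rfl⟩ := hy
  have := this hz
  obtain ⟨u, hu, hu2⟩ := this
  rwa [show φ z = u from by rw [← hu2]; exact (φ.apply_symm_apply u)]

lemma kernel_unique {v : V} {K1 K2 : Set V} (h1 : IsKernel Γ v K1) (h2 : IsKernel Γ v K2) :
    K1 = K2 :=
  subset_antisymm (h1.2 _ h2.1) (h2.2 _ h1.1)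

lemma img_finite (hlf : LocFin Γ) {F : Set V} (hF : F.Finite) : (img Γ F).Finite :=
  hF.biUnion fun x _ => hlf x

lemma subset_img (hr : Refl Γ) (F : Set V) : F ⊆ img Γ F :=
  fun x hx => Set.mem_biUnion hx (hr x)

lemma img_union (A B : Set V) : img Γ (A ∪ B) = img Γ A ∪ img Γ B := by
  simp only [img, Set.biUnion_union]

lemma submod (hr : Refl Γ) (hlf : LocFin Γ) {A B : Set V} (hA : A.Finite) (hB : B.Finite) :
    (bd Γ (A ∪ B)).ncard + (bd Γ (A ∩ B)).ncard ≤ (bd Γ A).ncard + (bd Γ B).ncard := by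
  have d : ∀ X : Set V, X.Finite → (bd Γ X).ncard + X.ncard = (img Γ X).ncard := by
    intro X hX
    rw [bd]
    exact Set.ncard_diff_add_ncard_of_subset (subset_img hr X) (img_finite hlf hX)
  have c1 : (img Γ A ∪ img Γ B).ncard + (img Γ A ∩ img Γ B).ncard
      = (img Γ A).ncard + (img Γ B).ncard :=
    Set.ncard_union_add_ncard_inter _ _ (img_finite hlf hA) (img_finite hlf hB)
  have c2 : (A ∪ B).ncard + (A ∩ B).ncard = A.ncard + B.ncard :=
    Set.ncard_union_add_ncard_inter _ _ hA hB
  have i1 : (img Γ (A ∩ B)).ncard ≤ (img Γ A ∩ img Γ B).ncard := by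
    apply Set.ncard_le_ncard _ ((img_finite hlf hA).inter_of_left _)
    intro y hy
    simp only [img, Set.mem_inter_iff, mem_iUnion, exists_prop] at hy ⊢
    obtain ⟨x, ⟨hxA, hxB⟩, hy⟩ := hy
    exact ⟨⟨x, hxA, hy⟩, ⟨x, hxB, hy⟩⟩
  have d1 := d (A ∪ B) (hA.union hB)
  have d2 := d (A ∩ B) (hA.inter_of_left _)
  have d3 := d A hA
  have d4 := d B hB
  rw [img_union] at d1
  omega

lemma mu_le (v : V) {F : Set V} (hF : MoserSet Γ v F) : mu Γ v ≤ (bd Γ F).ncard :=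
  Nat.sInf_le ⟨F, hF, rfl⟩

end Aux

/-- The kernel graph is vertex-transitive and Ω⁻(v) \ {v} ⊆ ∂(K_v). -/
theorem stmt8 {V : Type*} (Γ : V → Set V) (hvt : VT Γ) (hr : Refl Γ) (hlf : LocFin Γ)
    (K : V → Set V) (hK : ∀ v, IsKernel Γ v (K v)) :
    VT (fun v => Γ v ∩ K v) ∧
      ∀ v : V, rev (fun v => Γ v ∩ K v) v \ {v} ⊆ bd Γ (K v) := by
  have kerEq : ∀ (φ : V ≃ V), IsAuto Γ φ → ∀ z, K (φ z) = φ '' K z := fun φ hφ z =>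
    kernel_unique (hK (φ z)) (kernel_auto hφ (hK z))
  constructor
  · intro x y
    obtain ⟨φ, hφ, hxy⟩ := hvt x y
    refine ⟨φ, fun z => ?_, hxy⟩
    show Γ (φ z) ∩ K (φ z) = φ '' (Γ z ∩ K z)
    rw [hφ z, kerEq φ hφ z, Set.image_inter φ.injective]
  · intro v w hw
    obtain ⟨hwrev, hwne⟩ := hw
    simp only [rev, mem_setOf_eq, Set.mem_inter_iff] at hwrev
    obtain ⟨hvΓ, hvK⟩ := hwrev
    have hwne' : w ≠ v := by simpa using hwne
    obtain ⟨⟨⟨hKvfin, hvKv, hKvrev⟩, hKvmu⟩, hKvmin⟩ := hK v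
    obtain ⟨⟨⟨hKwfin, hwKw, hKwrev⟩, hKwmu⟩, hKwmin⟩ := hK w
    have hwnotKv : w ∉ K v := by
      intro hwKv
      have hmem : w ∈ rev Γ v ∩ K v := ⟨hvΓ, hwKv⟩
      rw [hKvrev] at hmem
      exact hwne' hmem
    refine ⟨?_, hwnotKv⟩
    by_contra himg
    have hU : MoserSet Γ w (K v ∪ K w) := by
      refine ⟨hKvfin.union hKwfin, Or.inr hwKw, ?_⟩
      apply subset_antisymm
      · rintro y ⟨hy1, hy2 | hy2⟩
        · exact absurd (Set.mem_biUnion hy2 hy1) himg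
        · rw [← hKwrev]; exact ⟨hy1, hy2⟩
      · intro y hy
        rw [Set.mem_singleton_iff] at hy; rw [hy]
        exact ⟨hr w, Or.inr hwKw⟩
    have hI : MoserSet Γ v (K v ∩ K w) := by
      refine ⟨hKvfin.inter_of_left _, ⟨hvKv, hvK⟩, ?_⟩
      apply subset_antisymm
      · rintro y ⟨hy1, hy2, _⟩
        rw [← hKvrev]; exact ⟨hy1, hy2⟩
      · intro y hy
        rw [Set.mem_singleton_iff] at hy; rw [hy]
        exact ⟨hr v, hvKv, hvK⟩
    have h1 := mu_le w hU
    have h2 := mu_le v hI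
    have h3 := submod hr hlf hKvfin hKwfin
    rw [hKvmu, hKwmu] at h3
    have hImol : Molecule Γ v (K v ∩ K w) := ⟨hI, by omega⟩
    have hsub : K v ⊆ K w := (hKvmin _ hImol).trans Set.inter_subset_right
    obtain ⟨ψ, hψ, hψv⟩ := hvt v w
    have hcard : (K w).ncard ≤ (K v).ncard := by
      rw [← hψv, kerEq ψ hψ v, ncard_image]
    have heq : K v = K w := Set.eq_of_subset_of_ncard_le hsub hcard hKwfin
    exact hwnotKv (heq ▸ hwKw)
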